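/- For n ≥ 1, the function p(x,y) = |x − y|/√(|x − y|² + 4|x||y|) on ℝⁿ \ {0} satisfies the triangle inequality: p(x,y) ≤ p(x,z) + p(z,y) for all nonzero x, y, z ∈ ℝⁿ. Consequently p is a metric on ℝⁿ \ {0}. -/

import Mathlib

/-- AM-GM style: `4ABG ≤ (A+B)(G+B)(A+G)` for positive reals. -/
private lemma amgm3 (A B G : ℝ) (hA : 0 < A) (hB : 0 < B) (hG : 0 < G) :
    4*A*B*G ≤ (A+B)*((G+B)*(A+G)) := by
  nlinarith [mul_nonneg (sq_nonneg (A-B)) hG.le, mul_nonneg (sq_nonneg (G-B)) hA.le,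
    mul_nonneg (sq_nonneg (A-G)) hB.le, mul_pos (mul_pos hA hB) hG]

/-- The hard mixed case `B ≤ G ≤ A` of the key polynomial inequality. -/
private lemma key3 (t u v A B G : ℝ) (hA : 0 < A) (hB : 0 < B) (hG : 0 < G)
    (ht : 0 ≤ t) (hu : 0 ≤ u) (hv : 0 ≤ v)
    (hP : t*G^2 ≤ u*B^2 + v*A^2)
    (hacu : A^2 ≤ G^2 + u)
    (htuv : t ≤ u + v) (hab : A^2 - B^2 ≤ t)
    (hBG : B ≤ G) (hGA : G ≤ A) :
    4*t*A*B*G^2 ≤ 4*u*A*B^2*G + 4*v*A^2*B*G + t*u*v := by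
  have e1 : t*G ≤ (u+v)*G := mul_le_mul_of_nonneg_right htuv hG.le
  have step1 : t*G - u*B - v*A ≤ u*(G-B) - v*(A-G) := by linarith [e1]
  have step2 : G*(t*G - u*B - v*A) ≤ v*A*(A-G) - u*B*(G-B) := by linarith [hP]
  have step1B := mul_le_mul_of_nonneg_left step1 hB.le
  have step3 : (G+B)*(t*G - u*B - v*A) ≤ v*(A-G)*(A-B) := by linarith [step1B, step2]
  have step3' := mul_le_mul_of_nonneg_left step3 (by positivity : (0:ℝ) ≤ A+G)
  have hvab : 0 ≤ v*(A-B) := mul_nonneg hv (by linarith)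
  have e4 : v*(A-B)*(A^2-G^2) ≤ v*(A-B)*u := mul_le_mul_of_nonneg_left (by linarith) hvab
  have step4 : (A+G)*((G+B)*(t*G - u*B - v*A)) ≤ u*(v*(A-B)) := by linarith [step3', e4]
  have e7 := mul_le_mul_of_nonneg_left step4 (by positivity : (0:ℝ) ≤ 4*A*B*G)
  have e5 : 4*A*B*G*(u*(v*(A-B))) ≤ (A+B)*((G+B)*(A+G))*(u*(v*(A-B))) :=
    mul_le_mul_of_nonneg_right (amgm3 A B G hA hB hG)
      (by positivity)
  have e6 : (A^2-B^2)*(u*v) ≤ t*(u*v) :=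
    mul_le_mul_of_nonneg_right hab (mul_nonneg hu hv)
  have e6' : (G+B)*(A+G)*((A^2-B^2)*(u*v)) ≤ (G+B)*(A+G)*(t*(u*v)) :=
    mul_le_mul_of_nonneg_left e6 (by positivity)
  have hX : (0:ℝ) < (G+B)*(A+G) := by positivity
  have hchain : (G+B)*(A+G)*(4*A*B*G*(t*G - u*B - v*A)) ≤ (G+B)*(A+G)*(t*(u*v)) := by
    linarith [e7, e5, e6']
  have hfin : 4*A*B*G*(t*G - u*B - v*A) ≤ t*(u*v) :=
    le_of_mul_le_mul_left hchain hX
  linarith [hfin]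

/-- Key polynomial inequality: with `A,B,G` the square roots of `|x|,|y|,|z|`,
and `t,u,v` the mutual distances, we have `4tABG² ≤ 4uAB²G + 4vA²BG + tuv`. -/
private lemma key (t u v A B G : ℝ) (hA : 0 < A) (hB : 0 < B) (hG : 0 < G)
    (ht : 0 ≤ t) (hu : 0 ≤ u) (hv : 0 ≤ v)
    (hP : t*G^2 ≤ u*B^2 + v*A^2)
    (hacu : A^2 ≤ G^2 + u) (hbcv : B^2 ≤ G^2 + v)
    (htuv : t ≤ u + v) (hab : A^2 - B^2 ≤ t) (hba : B^2 - A^2 ≤ t) :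
    4*t*A*B*G^2 ≤ 4*u*A*B^2*G + 4*v*A^2*B*G + t*u*v := by
  rcases le_total A G with hAG | hAG <;> rcases le_total B G with hBG | hBG
  · -- A ≤ G, B ≤ G
    have h1 : 0 ≤ u*A*B^2*(G-B) := mul_nonneg (by positivity) (sub_nonneg.2 hBG)
    have h2 : 0 ≤ v*A^2*B*(G-A) := mul_nonneg (by positivity) (sub_nonneg.2 hAG)
    have h3 : 4*A*B*(t*G^2) ≤ 4*A*B*(u*B^2+v*A^2) :=
      mul_le_mul_of_nonneg_left hP (by positivity)
    have h4 : 0 ≤ t*u*v := by positivity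
    nlinarith [h1, h2, h3, h4]
  · -- A ≤ G ≤ B : symmetric to key3
    have h := key3 t v u B A G hB hA hG ht hv hu (by linarith [hP])
      hbcv (by linarith) hba hAG hBG
    linarith [h]
  · -- B ≤ G ≤ A
    exact key3 t u v A B G hA hB hG ht hu hv hP hacu htuv hab hBG hAG
  · -- G ≤ A, G ≤ B
    nlinarith [mul_nonneg hu hv, mul_nonneg ht hu, mul_nonneg ht hv,
      mul_nonneg (mul_nonneg (mul_nonneg hA.le hB.le) hG.le) (mul_nonneg hu (sub_nonneg.2 hBG)),
      mul_nonneg (mul_nonneg (mul_nonneg hA.le hB.le) hG.le) (mul_nonneg hv (sub_nonneg.2 hAG)),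
      mul_nonneg (mul_nonneg (mul_nonneg hA.le hB.le) hG.le) (mul_nonneg hG.le (sub_nonneg.2 htuv))]

private lemma sqrt_one_add_sq_pos (X : ℝ) : 0 < Real.sqrt (X^2+1) :=
  Real.sqrt_pos.2 (by positivity)

/-- If `s ≤ w + z + s·w·z` for nonnegative reals, then
`s/√(s²+1) ≤ w/√(w²+1) + z/√(z²+1)`. -/
private lemma fadd (s w z : ℝ) (hs : 0 ≤ s) (hw : 0 ≤ w) (hz : 0 ≤ z)
    (h : s ≤ w + z + s*w*z) :
    s/Real.sqrt (s^2+1) ≤ w/Real.sqrt (w^2+1) + z/Real.sqrt (z^2+1) := by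
  rcases le_or_gt 1 (w*z) with hwz | hwz
  · -- RHS ≥ 1 > LHS
    have hw0 : 0 < w := by
      by_contra h'
      push_neg at h'
      nlinarith [mul_nonpos_of_nonpos_of_nonneg h' hz]
    have hz0 : 0 < z := by
      by_contra h'
      push_neg at h'
      nlinarith [mul_nonpos_of_nonneg_of_nonpos hw h']
    have lhs_lt : s/Real.sqrt (s^2+1) < 1 := by
      rw [div_lt_one (sqrt_one_add_sq_pos s)]
      have : s = Real.sqrt (s^2) := (Real.sqrt_sq hs).symm
      calc s = Real.sqrt (s^2) := this
        _ < Real.sqrt (s^2+1) := by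
            apply Real.sqrt_lt_sqrt (sq_nonneg s); linarith
    have k1 : 1/Real.sqrt (w^2+1) ≤ z/Real.sqrt (z^2+1) := by
      rw [div_le_div_iff₀ (sqrt_one_add_sq_pos w) (sqrt_one_add_sq_pos z)]
      calc 1 * Real.sqrt (z^2+1) = Real.sqrt (z^2+1) := one_mul _
        _ ≤ Real.sqrt (z^2*(w^2+1)) := Real.sqrt_le_sqrt (by nlinarith)
        _ = z * Real.sqrt (w^2+1) := by
            rw [Real.sqrt_mul (sq_nonneg z), Real.sqrt_sq hz]
    have k2 : Real.sqrt (w^2+1) ≤ w+1 := by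
      calc Real.sqrt (w^2+1) ≤ Real.sqrt ((w+1)^2) := Real.sqrt_le_sqrt (by nlinarith)
        _ = w+1 := Real.sqrt_sq (by linarith)
    have k3 : 1 ≤ (w+1)/Real.sqrt (w^2+1) :=
      (one_le_div (sqrt_one_add_sq_pos w)).2 k2
    have k4 : (w+1)/Real.sqrt (w^2+1) = w/Real.sqrt (w^2+1) + 1/Real.sqrt (w^2+1) := by
      rw [← add_div]
    linarith
  · -- w*z < 1
    have hmz : 0 ≤ 1 - w*z := by linarith
    have hs1 : s*(1-w*z) ≤ w+z := by nlinarith [h]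
    have hsq : (s*(1-w*z))*(s*(1-w*z)) ≤ (w+z)*(w+z) :=
      mul_self_le_mul_self (mul_nonneg hs hmz) hs1
    have key2 : s^2*((w^2+1)*(z^2+1)) ≤ (w+z)^2*(s^2+1) := by nlinarith [hsq]
    have hProd : (0:ℝ) < Real.sqrt ((w^2+1)*(z^2+1)) :=
      Real.sqrt_pos.2 (by positivity)
    have step : s/Real.sqrt (s^2+1) ≤ (w+z)/Real.sqrt ((w^2+1)*(z^2+1)) := by
      rw [div_le_div_iff₀ (sqrt_one_add_sq_pos s) hProd]
      calc s * Real.sqrt ((w^2+1)*(z^2+1)) = Real.sqrt (s^2*((w^2+1)*(z^2+1))) := by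
            rw [Real.sqrt_mul (sq_nonneg s), Real.sqrt_sq hs]
        _ ≤ Real.sqrt ((w+z)^2*(s^2+1)) := Real.sqrt_le_sqrt key2
        _ = (w+z) * Real.sqrt (s^2+1) := by
            rw [Real.sqrt_mul (sq_nonneg (w+z)), Real.sqrt_sq (by linarith : (0:ℝ) ≤ w+z)]
    have hPR : Real.sqrt ((w^2+1)*(z^2+1)) = Real.sqrt (w^2+1) * Real.sqrt (z^2+1) :=
      Real.sqrt_mul (by positivity) _
    have hw1 : 1 ≤ Real.sqrt (w^2+1) := by
      have := Real.sqrt_le_sqrt (show (1:ℝ) ≤ w^2+1 by nlinarith)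
      rwa [Real.sqrt_one] at this
    have hz1 : 1 ≤ Real.sqrt (z^2+1) := by
      have := Real.sqrt_le_sqrt (show (1:ℝ) ≤ z^2+1 by nlinarith)
      rwa [Real.sqrt_one] at this
    have final : (w+z)/Real.sqrt ((w^2+1)*(z^2+1)) ≤
        w/Real.sqrt (w^2+1) + z/Real.sqrt (z^2+1) := by
      rw [hPR, div_add_div _ _ (ne_of_gt (sqrt_one_add_sq_pos w)) (ne_of_gt (sqrt_one_add_sq_pos z))]
      have h0 : (0:ℝ) < Real.sqrt (w^2+1) * Real.sqrt (z^2+1) := by nlinarith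
      rw [div_le_div_iff₀ h0 h0]
      nlinarith [mul_nonneg hw (by linarith : (0:ℝ) ≤ Real.sqrt (z^2+1) - 1),
        mul_nonneg hz (by linarith : (0:ℝ) ≤ Real.sqrt (w^2+1) - 1), h0]
    linarith

/-- Scalar triangle inequality for the point pair function. -/
private lemma scalar_tri (t u v a b c : ℝ) (ha : 0 < a) (hb : 0 < b) (hc : 0 < c)
    (ht : 0 ≤ t) (hu : 0 ≤ u) (hv : 0 ≤ v)
    (hptol : t*c ≤ u*b + v*a) (hacu : a ≤ c + u) (hbcv : b ≤ c + v)
    (htuv : t ≤ u + v) (hab : a - b ≤ t) (hba : b - a ≤ t) :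
    t / Real.sqrt (t^2 + 4*a*b) ≤ u / Real.sqrt (u^2 + 4*a*c) + v / Real.sqrt (v^2 + 4*c*b) := by
  set A := Real.sqrt a with hAdef
  set B := Real.sqrt b with hBdef
  set G := Real.sqrt c with hGdef
  have hA : 0 < A := Real.sqrt_pos.2 ha
  have hB : 0 < B := Real.sqrt_pos.2 hb
  have hG : 0 < G := Real.sqrt_pos.2 hc
  have hA2 : A^2 = a := Real.sq_sqrt ha.le
  have hB2 : B^2 = b := Real.sq_sqrt hb.le
  have hG2 : G^2 = c := Real.sq_sqrt hc.le
  have hkey : 4*t*A*B*G^2 ≤ 4*u*A*B^2*G + 4*v*A^2*B*G + t*u*v := by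
    apply key t u v A B G hA hB hG ht hu hv <;> (try simp only [hA2, hB2, hG2]) <;> linarith
  set s := t/(2*(A*B)) with hsdef
  set w := u/(2*(A*G)) with hwdef
  set z := v/(2*(B*G)) with hzdef
  have hs : 0 ≤ s := by positivity
  have hwp : 0 ≤ w := by positivity
  have hzp : 0 ≤ z := by positivity
  have hsum : s ≤ w + z + s*w*z := by
    have e : w + z + s*w*z - s =
        (4*u*A*B^2*G + 4*v*A^2*B*G + t*u*v - 4*t*A*B*G^2) / (8*(A*B*G)^2) := by
      rw [hsdef, hwdef, hzdef]
      field_simp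
      ring
    have : 0 ≤ w + z + s*w*z - s := by
      rw [e]
      apply div_nonneg (by linarith) (by positivity)
    linarith
  have conv : ∀ r m : ℝ, 0 ≤ r → 0 < m →
      r / Real.sqrt (r^2 + (2*m)^2*1) = (r/(2*m)) / Real.sqrt ((r/(2*m))^2 + 1) := by
    intro r m hr hm
    have h2m : (0:ℝ) < 2*m := by linarith
    have hsq : Real.sqrt (r^2 + (2*m)^2*1) = (2*m) * Real.sqrt ((r/(2*m))^2 + 1) := by
      rw [show r^2 + (2*m)^2*1 = (2*m)^2 * ((r/(2*m))^2 + 1) by field_simp,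
        Real.sqrt_mul (sq_nonneg _), Real.sqrt_sq h2m.le]
    rw [hsq, div_div]
  have ct : t / Real.sqrt (t^2 + 4*a*b) = s / Real.sqrt (s^2+1) := by
    have := conv t (A*B) ht (by positivity)
    rw [show (2*(A*B))^2*1 = 4*a*b by rw [← hA2, ← hB2]; ring] at this
    rw [this, hsdef]
  have cu : u / Real.sqrt (u^2 + 4*a*c) = w / Real.sqrt (w^2+1) := by
    have := conv u (A*G) hu (by positivity)
    rw [show (2*(A*G))^2*1 = 4*a*c by rw [← hA2, ← hG2]; ring] at this
    rw [this, hwdef]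
  have cv : v / Real.sqrt (v^2 + 4*c*b) = z / Real.sqrt (z^2+1) := by
    have := conv v (B*G) hv (by positivity)
    rw [show (2*(B*G))^2*1 = 4*c*b by rw [← hB2, ← hG2]; ring] at this
    rw [this, hzdef]
  rw [ct, cu, cv]
  exact fadd s w z hs hwp hzp hsum

theorem ppf_metric_punctured (n : ℕ) (hn : 1 ≤ n)
    (p : EuclideanSpace ℝ (Fin n) → EuclideanSpace ℝ (Fin n) → ℝ)
    (hp : ∀ x y, p x y = ‖x - y‖ / Real.sqrt (‖x - y‖^2 + 4 * ‖x‖ * ‖y‖)) :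
    (∀ x y z : EuclideanSpace ℝ (Fin n), x ≠ 0 → y ≠ 0 → z ≠ 0 →
      p x y ≤ p x z + p z y) ∧
    (∀ x y : EuclideanSpace ℝ (Fin n), x ≠ 0 → y ≠ 0 → p x y = p y x) ∧
    (∀ x y : EuclideanSpace ℝ (Fin n), x ≠ 0 → y ≠ 0 → (p x y = 0 ↔ x = y)) := by
  refine ⟨?_, ?_, ?_⟩
  · intro x y z hx hy hz
    rw [hp x y, hp x z, hp z y]
    have ha : 0 < ‖x‖ := norm_pos_iff.2 hx
    have hb : 0 < ‖y‖ := norm_pos_iff.2 hy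
    have hc : 0 < ‖z‖ := norm_pos_iff.2 hz
    have hptol : ‖x - y‖ * ‖z‖ ≤ ‖x - z‖ * ‖y‖ + ‖z - y‖ * ‖x‖ := by
      have := EuclideanGeometry.mul_dist_le_mul_dist_add_mul_dist x z y (0 : EuclideanSpace ℝ (Fin n))
      simpa [dist_eq_norm] using this
    have hacu : ‖x‖ ≤ ‖z‖ + ‖x - z‖ := by
      have := norm_sub_norm_le x z; linarith
    have hbcv : ‖y‖ ≤ ‖z‖ + ‖z - y‖ := by
      have := norm_sub_norm_le y z
      rw [← norm_sub_rev z y] at this; linarith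
    have htuv : ‖x - y‖ ≤ ‖x - z‖ + ‖z - y‖ := norm_sub_le_norm_sub_add_norm_sub x z y
    have hab : ‖x‖ - ‖y‖ ≤ ‖x - y‖ := norm_sub_norm_le x y
    have hba : ‖y‖ - ‖x‖ ≤ ‖x - y‖ := by
      have := norm_sub_norm_le y x
      rw [norm_sub_rev y x] at this; linarith
    have h := scalar_tri ‖x - y‖ ‖x - z‖ ‖z - y‖ ‖x‖ ‖y‖ ‖z‖ ha hb hc
      (norm_nonneg _) (norm_nonneg _) (norm_nonneg _) hptol hacu hbcv htuv hab hba
    exact h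
  · intro x y hx hy
    rw [hp x y, hp y x, norm_sub_rev x y,
      show (4:ℝ)*‖x‖*‖y‖ = 4*‖y‖*‖x‖ by ring]
  · intro x y hx hy
    rw [hp x y]
    constructor
    · intro h
      have ha : 0 < ‖x‖ := norm_pos_iff.2 hx
      have hb : 0 < ‖y‖ := norm_pos_iff.2 hy
      have hd : 0 < Real.sqrt (‖x - y‖^2 + 4 * ‖x‖ * ‖y‖) := by
        apply Real.sqrt_pos.2
        nlinarith [sq_nonneg ‖x - y‖, mul_pos ha hb]
      have := (div_eq_zero_iff.1 h).resolve_right (ne_of_gt hd)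
      have : x - y = 0 := norm_eq_zero.1 this
      exact sub_eq_zero.1 this
    · rintro rfl
      simp
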